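/- If P[X ≤ t] ≥ p·P[Y ≤ t] for all real t with p ∈ (0,1], then there exists a coupling of X and Y such that P[X ≤ Y | Y] ≥ p almost surely, and conversely. -/

import Mathlib

open MeasureTheory
open ProbabilityTheory Set


/-- Quantile function of a real probability measure (junk value 0 outside `(0,1)`). -/
noncomputable def qf (μ : Measure ℝ) (u : ℝ) : ℝ :=
  if 0 < u ∧ u < 1 then sInf {x | u ≤ cdf μ x} else 0

lemma qf_le_iff (μ : Measure ℝ) [IsProbabilityMeasure μ] {u : ℝ} (h0 : 0 < u) (h1 : u < 1)
    (x : ℝ) : qf μ u ≤ x ↔ u ≤ cdf μ x := by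
  set S := {x | u ≤ cdf μ x} with hS
  have hne : S.Nonempty := by
    have : ∀ᶠ y in Filter.atTop, u < cdf μ y :=
      (tendsto_cdf_atTop μ).eventually (eventually_gt_nhds h1)
    rcases this.exists with ⟨x, hx⟩
    exact ⟨x, hx.le⟩
  have hbdd : BddBelow S := by
    have : ∀ᶠ y in Filter.atBot, cdf μ y < u :=
      (tendsto_cdf_atBot μ).eventually (eventually_lt_nhds h0)
    rcases this.exists with ⟨x₀, hx₀⟩
    refine ⟨x₀, fun s hs => ?_⟩
    by_contra h
    push_neg at h
    exact absurd (le_trans hs (monotone_cdf μ h.le)) (not_le.mpr hx₀)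
  have hmem : sInf S ∈ S := by
    have htd : Filter.Tendsto (cdf μ) (nhdsWithin (sInf S) (Set.Ioi (sInf S)))
        (nhds (cdf μ (sInf S))) :=
      ((cdf μ).right_continuous (sInf S)).tendsto.mono_left
        (nhdsWithin_mono _ Ioi_subset_Ici_self)
    have hev : ∀ᶠ y in nhdsWithin (sInf S) (Set.Ioi (sInf S)), u ≤ cdf μ y := by
      filter_upwards [self_mem_nhdsWithin] with y hy
      rcases (csInf_lt_iff hbdd hne).mp hy with ⟨s, hsS, hsy⟩
      exact le_trans hsS (monotone_cdf μ hsy.le)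
    exact ge_of_tendsto htd hev
  have hqf : qf μ u = sInf S := by rw [qf, if_pos ⟨h0, h1⟩]
  rw [hqf]
  constructor
  · intro h
    exact le_trans hmem (monotone_cdf μ h)
  · intro h
    exact csInf_le hbdd h

lemma qf_measurable (μ : Measure ℝ) [IsProbabilityMeasure μ] : Measurable (qf μ) := by
  apply measurable_of_Iic
  intro x
  by_cases h0x : (0:ℝ) ≤ x
  · have : qf μ ⁻¹' Iic x = (Ioo (0:ℝ) 1 ∩ Iic (cdf μ x)) ∪ (Ioo (0:ℝ) 1)ᶜ := by
      ext u
      by_cases hu : 0 < u ∧ u < 1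
      · simp only [mem_preimage, mem_Iic, mem_union, mem_inter_iff, mem_Ioo, mem_compl_iff,
          not_and, not_lt]
        rw [show qf μ u ≤ x ↔ u ≤ cdf μ x from qf_le_iff μ hu.1 hu.2 x]
        constructor
        · intro h; exact Or.inl ⟨hu, h⟩
        · rintro (⟨_, h⟩ | h)
          · exact h
          · exact absurd (h hu.1) (not_le.mpr hu.2)
      · simp only [mem_preimage, mem_Iic, mem_union, mem_inter_iff, mem_Ioo, mem_compl_iff]
        rw [qf, if_neg hu]
        tauto
    rw [this]
    exact ((measurableSet_Ioo.inter measurableSet_Iic).union measurableSet_Ioo.compl)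
  · have : qf μ ⁻¹' Iic x = Ioo (0:ℝ) 1 ∩ Iic (cdf μ x) := by
      ext u
      by_cases hu : 0 < u ∧ u < 1
      · simp only [mem_preimage, mem_Iic, mem_inter_iff, mem_Ioo]
        rw [show qf μ u ≤ x ↔ u ≤ cdf μ x from qf_le_iff μ hu.1 hu.2 x]
        tauto
      · simp only [mem_preimage, mem_Iic, mem_inter_iff, mem_Ioo]
        rw [qf, if_neg hu]
        constructor
        · intro h; exact absurd h (not_le.mpr (lt_of_not_ge h0x))
        · tauto
    rw [this]
    exact measurableSet_Ioo.inter measurableSet_Iic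


lemma vol_Iic_inter (c : ℝ) :
    MeasureTheory.volume (Set.Iic c ∩ Set.Ioo (0:ℝ) 1) = ENNReal.ofReal (min c 1) := by
  rcases le_or_gt c 0 with hc | hc
  · have : Set.Iic c ∩ Set.Ioo (0:ℝ) 1 = ∅ := by
      ext u; simp only [mem_inter_iff, mem_Iic, mem_Ioo, mem_empty_iff_false, iff_false]
      rintro ⟨h1, h2, h3⟩; linarith
    rw [this]
    simp only [measure_empty]
    symm
    rw [ENNReal.ofReal_eq_zero]
    exact min_le_of_left_le hc
  rcases lt_or_ge c 1 with hc1 | hc1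
  · have : Set.Iic c ∩ Set.Ioo (0:ℝ) 1 = Set.Ioc 0 c := by
      ext u; simp only [mem_inter_iff, mem_Iic, mem_Ioo, mem_Ioc]
      constructor
      · rintro ⟨h1, h2, h3⟩; exact ⟨h2, h1⟩
      · rintro ⟨h1, h2⟩; exact ⟨h2, h1, lt_of_le_of_lt h2 hc1⟩
    rw [this, Real.volume_Ioc, min_eq_left hc1.le, sub_zero]
  · have : Set.Iic c ∩ Set.Ioo (0:ℝ) 1 = Set.Ioo 0 1 := by
      ext u; simp only [mem_inter_iff, mem_Iic, mem_Ioo]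
      constructor
      · rintro ⟨h1, h2, h3⟩; exact ⟨h2, h3⟩
      · rintro ⟨h1, h2⟩; exact ⟨le_trans h2.le hc1, h1, h2⟩
    rw [this, Real.volume_Ioo, min_eq_right hc1, sub_zero]

noncomputable def unif : Measure ℝ := MeasureTheory.volume.restrict (Set.Ioo (0:ℝ) 1)

instance : IsProbabilityMeasure unif := by
  constructor
  rw [unif, Measure.restrict_apply MeasurableSet.univ, Set.univ_inter, Real.volume_Ioo]
  norm_num

lemma unif_apply {A : Set ℝ} (hA : MeasurableSet A) :
    unif A = MeasureTheory.volume (A ∩ Set.Ioo (0:ℝ) 1) :=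
  Measure.restrict_apply hA

lemma map_qf (μ : Measure ℝ) [IsProbabilityMeasure μ] :
    Measure.map (qf μ) unif = μ := by
  have hqm := qf_measurable μ
  haveI : IsProbabilityMeasure (Measure.map (qf μ) unif) :=
    Measure.isProbabilityMeasure_map hqm.aemeasurable
  refine Measure.ext_of_Iic _ _ (fun x => ?_)
  rw [Measure.map_apply hqm measurableSet_Iic,
    unif_apply (hqm measurableSet_Iic)]
  have hset : qf μ ⁻¹' Set.Iic x ∩ Set.Ioo (0:ℝ) 1 = Set.Iic (cdf μ x) ∩ Set.Ioo 0 1 := by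
    ext u
    simp only [mem_inter_iff, mem_preimage, mem_Iic, mem_Ioo]
    constructor
    · rintro ⟨h1, h2, h3⟩; exact ⟨(qf_le_iff μ h2 h3 x).mp h1, h2, h3⟩
    · rintro ⟨h1, h2, h3⟩; exact ⟨(qf_le_iff μ h2 h3 x).mpr h1, h2, h3⟩
  rw [hset, vol_Iic_inter, min_eq_left (cdf_le_one μ x), ofReal_cdf μ x]

lemma unif_Iic (c : ℝ) : unif (Set.Iic c) = ENNReal.ofReal (min c 1) := by
  rw [unif_apply measurableSet_Iic, vol_Iic_inter]

lemma map_affine_Iic (a b t : ℝ) (ha : 0 < a) :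
    (Measure.map (fun u => a * u + b) unif) (Set.Iic t)
      = ENNReal.ofReal (min ((t - b) / a) 1) := by
  rw [Measure.map_apply (by fun_prop) measurableSet_Iic]
  have hs : (fun u => a * u + b) ⁻¹' Set.Iic t = Set.Iic ((t - b) / a) := by
    ext u
    simp only [mem_preimage, mem_Iic]
    rw [le_div_iff₀ ha]
    constructor <;> intro h <;> linarith [mul_comm a u, mul_comm u a]
  rw [hs, unif_Iic]

lemma mix_eq_unif {p : ℝ} (hp : 0 < p) (hp1 : p ≤ 1) :
    (ENNReal.ofReal p) • Measure.map (fun u => p * u) unif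
      + (ENNReal.ofReal (1 - p)) • Measure.map (fun u => p + (1 - p) * u) unif = unif := by
  rcases eq_or_lt_of_le hp1 with hpe | hplt
  · subst hpe
    simp only [sub_self, ENNReal.ofReal_zero, zero_smul, add_zero, ENNReal.ofReal_one, one_smul]
    have : (fun u : ℝ => (1:ℝ) * u) = id := by funext u; simp
    rw [this, Measure.map_id]
  · have h1p : 0 < 1 - p := by linarith
    symm
    refine Measure.ext_of_Iic _ _ (fun t => ?_)
    rw [Measure.add_apply, Measure.smul_apply, Measure.smul_apply, smul_eq_mul, smul_eq_mul,
      unif_Iic]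
    have e1 : (fun u : ℝ => p * u) = fun u => p * u + 0 := by funext u; ring
    have e2 : (fun u : ℝ => p + (1 - p) * u) = fun u => (1 - p) * u + p := by funext u; ring
    rw [e1, e2, map_affine_Iic _ _ _ hp, map_affine_Iic _ _ _ h1p, sub_zero,
      ← ENNReal.ofReal_mul hp.le, ← ENNReal.ofReal_mul h1p.le]
    rcases le_or_gt t 0 with ht0 | ht0
    · have m1 : min t 1 ≤ 0 := min_le_of_left_le ht0
      have m2 : p * min (t / p) 1 ≤ 0 :=
        mul_nonpos_iff.mpr (Or.inl ⟨hp.le, min_le_of_left_le (div_nonpos_iff.mpr (Or.inr ⟨ht0, hp.le⟩))⟩)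
      have m3 : (1 - p) * min ((t - p) / (1 - p)) 1 ≤ 0 :=
        mul_nonpos_iff.mpr (Or.inl ⟨h1p.le,
          min_le_of_left_le (div_nonpos_iff.mpr (Or.inr ⟨by linarith, h1p.le⟩))⟩)
      rw [ENNReal.ofReal_of_nonpos m1, ENNReal.ofReal_of_nonpos m2, ENNReal.ofReal_of_nonpos m3,
        add_zero]
    rcases le_or_gt t p with htp | htp
    · have m1 : min t 1 = t := min_eq_left (by linarith)
      have m2 : min (t / p) 1 = t / p := min_eq_left ((div_le_one hp).mpr htp)
      have m3 : (1 - p) * min ((t - p) / (1 - p)) 1 ≤ 0 :=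
        mul_nonpos_iff.mpr (Or.inl ⟨h1p.le,
          min_le_of_left_le (div_nonpos_iff.mpr (Or.inr ⟨by linarith, h1p.le⟩))⟩)
      rw [m1, m2, ENNReal.ofReal_of_nonpos m3, add_zero, mul_div_cancel₀ _ hp.ne']
    rcases le_or_gt t 1 with ht1 | ht1
    · have m1 : min t 1 = t := min_eq_left ht1
      have m2 : min (t / p) 1 = 1 := min_eq_right ((one_le_div hp).mpr htp.le)
      have m3 : min ((t - p) / (1 - p)) 1 = (t - p) / (1 - p) :=
        min_eq_left ((div_le_one h1p).mpr (by linarith))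
      rw [m1, m2, m3, mul_one, mul_div_cancel₀ _ h1p.ne',
        ← ENNReal.ofReal_add hp.le (by linarith)]
      ring_nf
    · have m1 : min t 1 = 1 := min_eq_right ht1.le
      have m2 : min (t / p) 1 = 1 := min_eq_right ((one_le_div hp).mpr (by linarith))
      have m3 : min ((t - p) / (1 - p)) 1 = 1 :=
        min_eq_right ((one_le_div h1p).mpr (by linarith))
      rw [m1, m2, m3, mul_one, mul_one, ← ENNReal.ofReal_add hp.le h1p.le]
      ring_nf

section coupling

variable (μX μY : Measure ℝ) [IsProbabilityMeasure μX] [IsProbabilityMeasure μY] (p : ℝ)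

noncomputable def g1 : ℝ → ℝ × ℝ := fun u => (qf μX (p * u), qf μY u)
noncomputable def g2 : ℝ → ℝ × ℝ := fun u => (qf μX (p + (1 - p) * u), qf μY u)

lemma g1_meas : Measurable (g1 μX μY p) :=
  Measurable.prod (((qf_measurable μX).comp (measurable_const_mul p)))
    ((qf_measurable μY).comp measurable_id)

lemma g2_meas : Measurable (g2 μX μY p) :=
  Measurable.prod (((qf_measurable μX).comp (by fun_prop)))
    ((qf_measurable μY).comp measurable_id)

noncomputable def cpl : Measure (ℝ × ℝ) :=
  (ENNReal.ofReal p) • Measure.map (g1 μX μY p) unif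
    + (ENNReal.ofReal (1 - p)) • Measure.map (g2 μX μY p) unif

lemma cpl_prob (hp : 0 < p) (hp1 : p ≤ 1) : IsProbabilityMeasure (cpl μX μY p) := by
  constructor
  haveI i1 : IsProbabilityMeasure (Measure.map (g1 μX μY p) unif) :=
    Measure.isProbabilityMeasure_map (g1_meas μX μY p).aemeasurable
  haveI i2 : IsProbabilityMeasure (Measure.map (g2 μX μY p) unif) :=
    Measure.isProbabilityMeasure_map (g2_meas μX μY p).aemeasurable
  rw [cpl, Measure.add_apply, Measure.smul_apply, Measure.smul_apply, measure_univ, measure_univ,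
    smul_eq_mul, smul_eq_mul, mul_one, mul_one, ← ENNReal.ofReal_add hp.le (by linarith)]
  norm_num

lemma map_smul_add {α β : Type*} [MeasurableSpace α] [MeasurableSpace β] {f : α → β}
    (hf : Measurable f) (a b : ENNReal) (μ ν : Measure α) :
    a • Measure.map f μ + b • Measure.map f ν = Measure.map f (a • μ + b • ν) := by
  rw [Measure.map_add _ _ hf, Measure.map_smul, Measure.map_smul]

lemma cpl_fst (hp : 0 < p) (hp1 : p ≤ 1) :
    (cpl μX μY p).map Prod.fst = μX := by
  have h1 : Prod.fst ∘ (g1 μX μY p) = (qf μX) ∘ (fun u => p * u) := rfl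
  have h2 : Prod.fst ∘ (g2 μX μY p) = (qf μX) ∘ (fun u => p + (1 - p) * u) := rfl
  rw [cpl, Measure.map_add _ _ measurable_fst, Measure.map_smul, Measure.map_smul,
    Measure.map_map measurable_fst (g1_meas μX μY p),
    Measure.map_map measurable_fst (g2_meas μX μY p), h1, h2,
    ← Measure.map_map (qf_measurable μX) (measurable_const_mul p),
    ← Measure.map_map (qf_measurable μX) (by fun_prop : Measurable (fun u : ℝ => p + (1 - p) * u)),
    map_smul_add (qf_measurable μX), mix_eq_unif hp hp1, map_qf]

lemma cpl_snd (hp : 0 < p) (hp1 : p ≤ 1) :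
    (cpl μX μY p).map Prod.snd = μY := by
  have h1 : Prod.snd ∘ (g1 μX μY p) = qf μY := rfl
  have h2 : Prod.snd ∘ (g2 μX μY p) = qf μY := rfl
  rw [cpl, Measure.map_add _ _ measurable_snd, Measure.map_smul, Measure.map_smul,
    Measure.map_map measurable_snd (g1_meas μX μY p),
    Measure.map_map measurable_snd (g2_meas μX μY p), h1, h2, map_qf, ← add_smul,
    ← ENNReal.ofReal_add hp.le (by linarith)]
  norm_num

lemma cpl_key (hp : 0 < p) (hp1 : p ≤ 1)
    (hF : ∀ t : ℝ, p * (μY (Set.Iic t)).toReal ≤ (μX (Set.Iic t)).toReal)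
    {S : Set ℝ} (hS : MeasurableSet S) :
    ENNReal.ofReal p * μY S ≤ cpl μX μY p ({w : ℝ × ℝ | w.1 ≤ w.2} ∩ Prod.snd ⁻¹' S) := by
  have hA : MeasurableSet ({w : ℝ × ℝ | w.1 ≤ w.2} ∩ Prod.snd ⁻¹' S) :=
    (measurableSet_le measurable_fst measurable_snd).inter (measurable_snd hS)
  have hkey : ∀ u ∈ Set.Ioo (0:ℝ) 1, qf μY u ∈ S → g1 μX μY p u ∈
      ({w : ℝ × ℝ | w.1 ≤ w.2} ∩ Prod.snd ⁻¹' S) := by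
    rintro u ⟨hu0, hu1⟩ huS
    refine ⟨?_, huS⟩
    have hpu0 : 0 < p * u := mul_pos hp hu0
    have hpu1 : p * u < 1 := by nlinarith
    show qf μX (p * u) ≤ qf μY u
    rw [qf_le_iff μX hpu0 hpu1]
    have h1 : u ≤ cdf μY (qf μY u) := (qf_le_iff μY hu0 hu1 (qf μY u)).mp le_rfl
    have h2 : p * cdf μY (qf μY u) ≤ cdf μX (qf μY u) := by
      rw [cdf_eq_real, cdf_eq_real]
      exact hF _
    nlinarith
  have hmS : μY S = unif (qf μY ⁻¹' S) := by
    conv_lhs => rw [← map_qf μY]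
    exact Measure.map_apply (qf_measurable μY) hS
  calc ENNReal.ofReal p * μY S
      = ENNReal.ofReal p * unif (qf μY ⁻¹' S) := by rw [hmS]
    _ ≤ ENNReal.ofReal p * unif (g1 μX μY p ⁻¹' ({w : ℝ × ℝ | w.1 ≤ w.2} ∩ Prod.snd ⁻¹' S)) := by
        apply mul_le_mul_right
        rw [unif_apply ((qf_measurable μY) hS), unif_apply ((g1_meas μX μY p) hA)]
        apply measure_mono
        rintro u ⟨huS, hu⟩
        exact ⟨hkey u hu huS, hu⟩
    _ = ENNReal.ofReal p * (Measure.map (g1 μX μY p) unif)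
          ({w : ℝ × ℝ | w.1 ≤ w.2} ∩ Prod.snd ⁻¹' S) := by
        rw [Measure.map_apply (g1_meas μX μY p) hA]
    _ ≤ cpl μX μY p ({w : ℝ × ℝ | w.1 ≤ w.2} ∩ Prod.snd ⁻¹' S) := by
        rw [cpl, Measure.add_apply, Measure.smul_apply, smul_eq_mul]
        exact le_self_add

end coupling

/-- `P[X ≤ t] ≥ p·P[Y ≤ t]` for all `t` holds if and only if there exists a coupling
(a joint law `π` with marginals the laws of `X` and `Y`) with `P[X ≤ Y | Y] ≥ p` a.s. -/
theorem stmt2 (μX μY : Measure ℝ) [IsProbabilityMeasure μX] [IsProbabilityMeasure μY]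
    (p : ℝ) (hp : 0 < p) (hp1 : p ≤ 1) :
    (∀ t : ℝ, p * (μY (Set.Iic t)).toReal ≤ (μX (Set.Iic t)).toReal) ↔
      (∃ π : Measure (ℝ × ℝ), IsProbabilityMeasure π ∧
        π.map Prod.fst = μX ∧ π.map Prod.snd = μY ∧
        ∀ᵐ z ∂π, p ≤
          (π[Set.indicator {w : ℝ × ℝ | w.1 ≤ w.2} (fun _ => (1 : ℝ)) |
            MeasurableSpace.comap Prod.snd inferInstance]) z) := by
  have hA : MeasurableSet {w : ℝ × ℝ | w.1 ≤ w.2} :=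
    measurableSet_le measurable_fst measurable_snd
  have hm : MeasurableSpace.comap (Prod.snd : ℝ × ℝ → ℝ) inferInstance
      ≤ Prod.instMeasurableSpace := measurable_snd.comap_le
  set f : ℝ × ℝ → ℝ := Set.indicator {w : ℝ × ℝ | w.1 ≤ w.2} (fun _ => (1 : ℝ)) with hf_def
  constructor
  · intro hF
    set π := cpl μX μY p with hπ_def
    haveI hπ : IsProbabilityMeasure π := cpl_prob μX μY p hp hp1
    haveI : IsFiniteMeasure (π.trim hm) := isFiniteMeasure_trim hm
    refine ⟨π, hπ, cpl_fst μX μY p hp hp1, cpl_snd μX μY p hp hp1, ?_⟩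
    have hf_int : Integrable f π := (integrable_const 1).indicator hA
    set h := π[f|MeasurableSpace.comap Prod.snd inferInstance] with hh_def
    have hsetint : ∀ s, MeasurableSet[MeasurableSpace.comap (Prod.snd : ℝ × ℝ → ℝ)
        inferInstance] s → p * (π s).toReal ≤ ∫ x in s, f x ∂π := by
      rintro s ⟨S, hS, rfl⟩
      have h1 : ∫ x in Prod.snd ⁻¹' S, f x ∂π
          = (π ({w : ℝ × ℝ | w.1 ≤ w.2} ∩ Prod.snd ⁻¹' S)).toReal := by
        rw [hf_def, setIntegral_indicator hA, setIntegral_const, smul_eq_mul, mul_one,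
          Set.inter_comm, measureReal_def]
      have h2 : π (Prod.snd ⁻¹' S) = μY S := by
        rw [← cpl_snd μX μY p hp hp1, Measure.map_apply measurable_snd hS]
      rw [h1]
      calc p * (π (Prod.snd ⁻¹' S)).toReal
          = ((ENNReal.ofReal p) * μY S).toReal := by
            rw [ENNReal.toReal_mul, ENNReal.toReal_ofReal hp.le, h2]
        _ ≤ (π ({w : ℝ × ℝ | w.1 ≤ w.2} ∩ Prod.snd ⁻¹' S)).toReal :=
            ENNReal.toReal_mono (measure_ne_top π _) (cpl_key μX μY p hp hp1 hF hS)
    have h_meas : StronglyMeasurable[MeasurableSpace.comap (Prod.snd : ℝ × ℝ → ℝ)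
        inferInstance] h := stronglyMeasurable_condExp
    have h_int : Integrable h π := integrable_condExp
    set g : ℝ × ℝ → ℝ := fun z => h z - p with hg_def
    have hg_meas : StronglyMeasurable[MeasurableSpace.comap (Prod.snd : ℝ × ℝ → ℝ)
        inferInstance] g := h_meas.sub stronglyMeasurable_const
    have hg_int : Integrable g π := h_int.sub (integrable_const p)
    have hg_trim_int : Integrable g (π.trim hm) := hg_int.trim hm hg_meas
    have h0 : (0 : ℝ × ℝ → ℝ) ≤ᵐ[π.trim hm] g := by
      apply ae_nonneg_of_forall_setIntegral_nonneg hg_trim_int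
      intro s hs hμs
      rw [← setIntegral_trim hm hg_meas hs]
      have hint1 : ∫ x in s, g x ∂π = (∫ x in s, h x ∂π) - (π s).toReal * p := by
        rw [hg_def]
        rw [integral_sub h_int.integrableOn
          (integrableOn_const (measure_ne_top π s)), setIntegral_const,
          smul_eq_mul, measureReal_def]
      rw [hint1, hh_def, setIntegral_condExp hm hf_int hs]
      have := hsetint s hs
      linarith [mul_comm p (π s).toReal]
    have h0' : (0 : ℝ × ℝ → ℝ) ≤ᵐ[π] g := ae_le_of_ae_le_trim h0
    filter_upwards [h0'] with z hz
    simp only [hg_def, Pi.zero_apply] at hz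
    linarith
  · rintro ⟨π, hπ, hfst, hsnd, hae⟩ t
    haveI := hπ
    haveI : IsFiniteMeasure (π.trim hm) := isFiniteMeasure_trim hm
    have hf_int : Integrable f π := (integrable_const 1).indicator hA
    set h := π[f|MeasurableSpace.comap Prod.snd inferInstance] with hh_def
    have h_int : Integrable h π := integrable_condExp
    have hs : MeasurableSet[MeasurableSpace.comap (Prod.snd : ℝ × ℝ → ℝ) inferInstance]
        (Prod.snd ⁻¹' (Set.Iic t)) := ⟨Set.Iic t, measurableSet_Iic, rfl⟩
    have h1 : ∫ x in Prod.snd ⁻¹' (Set.Iic t), h x ∂π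
        = ∫ x in Prod.snd ⁻¹' (Set.Iic t), f x ∂π := setIntegral_condExp hm hf_int hs
    have h2 : ∫ x in Prod.snd ⁻¹' (Set.Iic t), f x ∂π
        = (π ({w : ℝ × ℝ | w.1 ≤ w.2} ∩ Prod.snd ⁻¹' (Set.Iic t))).toReal := by
      rw [hf_def, setIntegral_indicator hA, setIntegral_const, smul_eq_mul, mul_one,
        Set.inter_comm, measureReal_def]
    have h3 : p * (π (Prod.snd ⁻¹' (Set.Iic t))).toReal
        ≤ ∫ x in Prod.snd ⁻¹' (Set.Iic t), h x ∂π := by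
      have : ∫ _ in Prod.snd ⁻¹' (Set.Iic t), p ∂π
          ≤ ∫ x in Prod.snd ⁻¹' (Set.Iic t), h x ∂π :=
        setIntegral_mono_ae (integrableOn_const (measure_ne_top π _))
          h_int.integrableOn hae
      rwa [setIntegral_const, smul_eq_mul, mul_comm] at this
    have h4 : π ({w : ℝ × ℝ | w.1 ≤ w.2} ∩ Prod.snd ⁻¹' (Set.Iic t))
        ≤ π (Prod.fst ⁻¹' (Set.Iic t)) := by
      apply measure_mono
      rintro z ⟨hz1, hz2⟩
      simp only [Set.mem_preimage, Set.mem_Iic] at hz2 ⊢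
      exact le_trans hz1 hz2
    have h5 : π (Prod.snd ⁻¹' (Set.Iic t)) = μY (Set.Iic t) := by
      rw [← hsnd, Measure.map_apply measurable_snd measurableSet_Iic]
    have h6 : π (Prod.fst ⁻¹' (Set.Iic t)) = μX (Set.Iic t) := by
      rw [← hfst, Measure.map_apply measurable_fst measurableSet_Iic]
    have h7 : (π ({w : ℝ × ℝ | w.1 ≤ w.2} ∩ Prod.snd ⁻¹' (Set.Iic t))).toReal
        ≤ (μX (Set.Iic t)).toReal := by
      rw [← h6]
      exact ENNReal.toReal_mono (measure_ne_top π _) h4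
    calc p * (μY (Set.Iic t)).toReal = p * (π (Prod.snd ⁻¹' (Set.Iic t))).toReal := by rw [h5]
      _ ≤ ∫ x in Prod.snd ⁻¹' (Set.Iic t), h x ∂π := h3
      _ = (π ({w : ℝ × ℝ | w.1 ≤ w.2} ∩ Prod.snd ⁻¹' (Set.Iic t))).toReal := by rw [h1, h2]
      _ ≤ (μX (Set.Iic t)).toReal := h7
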